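/- arXiv:1612.07635 — 4 statements merged into one kernel-verified Lean document; each statement's English description precedes it below -/
import Mathlib

section
/- Let (X_i) be i.i.d. nonnegative random variables with partial sums S_n. Suppose there exist constants C₀, c > 0 and a nondecreasing function A : [0,∞) → (0,∞) and a positive sequence (a_n) such that sup_{z∈ℝ} P(S_n ∈ (z−h, z]) ≤ C₀ / a_n for all n, and P(X_1 > z) ≥ 2c / A(z) for all z ≥ 0. Then there exists C < ∞ such that for all even n ≥ 2 and all z ≥ 0: P(S_n ∈ (z−h, z]) ≤ (C / a_{n/2}) · e^{−c n / A(z)}. -/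
open MeasureTheory ProbabilityTheory Filter Set
open scoped ENNReal NNReal

/-- For an i.i.d. sequence of nonnegative random variables with partial sums
`S n`, if `sup_z P(S_n ∈ (z-h, z]) ≤ C₀ / a_n` for all `n` and `P(X > z) ≥ 2c / A(z)` for all
`z ≥ 0` (with `A` nondecreasing and positive, `a_n > 0`), then there is `C < ∞` such that for all
even `n = 2m ≥ 2` and `z ≥ 0`: `P(S_n ∈ (z-h, z]) ≤ (C / a_{n/2}) · e^{-c n / A(z)}`. -/
theorem stmt3 {Ω : Type*} [MeasureSpace Ω] [IsProbabilityMeasure (ℙ : Measure Ω)]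
    (X : ℕ → Ω → ℝ) (hmeas : ∀ i, Measurable (X i))
    (hnonneg : ∀ i ω, 0 ≤ X i ω)
    (hindep : iIndepFun X ℙ)
    (hident : ∀ i, Measure.map (X i) ℙ = Measure.map (X 0) ℙ)
    (h : ℝ) (hh : 0 < h)
    (C₀ c : ℝ) (hC₀ : 0 < C₀) (hc : 0 < c)
    (A : ℝ → ℝ) (hA_mono : MonotoneOn A (Set.Ici 0)) (hA_pos : ∀ z ≥ (0:ℝ), 0 < A z)
    (a : ℕ → ℝ) (ha_pos : ∀ n, 0 < a n)
    (hloc : ∀ n : ℕ, ∀ z : ℝ,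
      ℙ {ω | (∑ i ∈ Finset.range n, X i ω) ∈ Set.Ioc (z - h) z} ≤ ENNReal.ofReal (C₀ / a n))
    (htail : ∀ z ≥ (0:ℝ), ENNReal.ofReal (2 * c / A z) ≤ ℙ {ω | z < X 0 ω}) :
    ∃ C : ℝ, 0 < C ∧ ∀ m : ℕ, 1 ≤ m → ∀ z ≥ (0:ℝ),
      ℙ {ω | (∑ i ∈ Finset.range (2 * m), X i ω) ∈ Set.Ioc (z - h) z}
        ≤ ENNReal.ofReal ((C / a m) * Real.exp (-(c * (2 * m) / A z))) := by
  refine ⟨C₀, hC₀, ?_⟩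
  intro m hm z hz
  set U : Ω → ℝ := fun ω => ∑ i ∈ Finset.range m, X i ω with hU_def
  set V : Ω → ℝ := fun ω => ∑ i ∈ Finset.Ico m (2 * m), X i ω with hV_def
  have hUmeas : Measurable U := Finset.measurable_sum _ fun i _ => hmeas i
  have hVmeas : Measurable V := Finset.measurable_sum _ fun i _ => hmeas i
  have hsum : ∀ ω, (∑ i ∈ Finset.range (2 * m), X i ω) = U ω + V ω := by
    intro ω
    rw [hU_def, hV_def]
    exact (Finset.sum_range_add_sum_Ico _ (by omega : m ≤ 2 * m)).symm
  -- independence of U and V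
  have hIndep : IndepFun U V ℙ := by
    have hdisj : Disjoint (Finset.range m) (Finset.Ico m (2 * m)) := by
      simp only [Finset.disjoint_left, Finset.mem_range, Finset.mem_Ico]
      omega
    have h1 := hindep.indepFun_finset (Finset.range m) (Finset.Ico m (2 * m)) hdisj hmeas
    have h2 := h1.comp
      (φ := fun v : ((Finset.range m : Finset ℕ) : Type) → ℝ => ∑ i, v i)
      (ψ := fun v : ((Finset.Ico m (2 * m) : Finset ℕ) : Type) → ℝ => ∑ i, v i)
      (Finset.measurable_sum _ fun i _ => measurable_pi_apply i)
      (Finset.measurable_sum _ fun i _ => measurable_pi_apply i)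
    have hUeq : U = (fun v : ((Finset.range m : Finset ℕ) : Type) → ℝ => ∑ i, v i) ∘
        (fun a (i : (Finset.range m : Finset ℕ)) => X i a) := by
      funext ω
      simp only [Function.comp_apply, hU_def]
      exact (Finset.sum_coe_sort _ _).symm
    have hVeq : V = (fun v : ((Finset.Ico m (2 * m) : Finset ℕ) : Type) → ℝ => ∑ i, v i) ∘
        (fun a (i : (Finset.Ico m (2 * m) : Finset ℕ)) => X i a) := by
      funext ω
      simp only [Function.comp_apply, hV_def]
      exact (Finset.sum_coe_sort _ _).symm
    rw [hUeq, hVeq]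
    exact h2
  set μ := Measure.map U ℙ with hμ_def
  set ν := Measure.map V ℙ with hν_def
  haveI : IsProbabilityMeasure μ := Measure.isProbabilityMeasure_map hUmeas.aemeasurable
  haveI : IsProbabilityMeasure ν := Measure.isProbabilityMeasure_map hVmeas.aemeasurable
  have hmap : Measure.map (fun ω => (U ω, V ω)) ℙ = μ.prod ν :=
    (indepFun_iff_map_prod_eq_prod_map_map hUmeas.aemeasurable hVmeas.aemeasurable).mp hIndep
  set T : Set (ℝ × ℝ) := {p : ℝ × ℝ | p.1 + p.2 ∈ Set.Ioc (z - h) z} with hT_def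
  have hTmeas : MeasurableSet T := (measurable_fst.add measurable_snd) measurableSet_Ioc
  have hevent : {ω | (∑ i ∈ Finset.range (2 * m), X i ω) ∈ Set.Ioc (z - h) z}
      = (fun ω => (U ω, V ω)) ⁻¹' T := by
    ext ω
    simp only [Set.mem_setOf_eq, Set.mem_preimage, hT_def, hsum ω]
  -- the local bound on slices
  have hslice : ∀ y : ℝ, μ ((fun x => (x, y)) ⁻¹' T)
      ≤ Set.indicator (Set.Iic z) (fun _ => ENNReal.ofReal (C₀ / a m)) y := by
    intro y
    have hpre : (fun x : ℝ => (x, y)) ⁻¹' T = Set.Ioc (z - y - h) (z - y) := by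
      ext x
      simp only [Set.mem_preimage, hT_def, Set.mem_setOf_eq, Set.mem_Ioc]
      constructor <;> intro hx <;> constructor <;> linarith [hx.1, hx.2]
    rw [hpre]
    by_cases hy : y ≤ z
    · rw [Set.indicator_of_mem (Set.mem_Iic.mpr hy)]
      have : μ (Set.Ioc (z - y - h) (z - y)) =
          ℙ {ω | U ω ∈ Set.Ioc ((z - y) - h) (z - y)} := by
        rw [hμ_def, Measure.map_apply hUmeas measurableSet_Ioc]
        rfl
      rw [this]
      exact hloc m (z - y)
    · rw [Set.indicator_of_notMem (by simpa using hy)]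
      have hsub : Set.Ioc (z - y - h) (z - y) ⊆ Set.Iio 0 := by
        intro x hx
        have := hx.2
        simp only [Set.mem_Iio]
        linarith [not_le.mp hy]
      have h0 : μ (Set.Iio 0) = 0 := by
        rw [hμ_def, Measure.map_apply hUmeas measurableSet_Iio]
        have : U ⁻¹' Set.Iio 0 = ∅ := by
          ext ω
          simp only [Set.mem_preimage, Set.mem_Iio, Set.mem_empty_iff_false, iff_false, not_lt]
          exact Finset.sum_nonneg fun i _ => hnonneg i ω
        rw [this]; simp
      exact le_of_le_of_eq (measure_mono hsub) h0 |>.trans (le_refl 0) |>.trans bot_le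
  -- tail bound on ν (Iic z)
  have hp1 : ∀ i, ℙ {ω | X i ω ≤ z} = ℙ {ω | X 0 ω ≤ z} := by
    intro i
    have h1 : ℙ {ω | X i ω ≤ z} = (Measure.map (X i) ℙ) (Set.Iic z) := by
      rw [Measure.map_apply (hmeas i) measurableSet_Iic]; rfl
    have h2 : ℙ {ω | X 0 ω ≤ z} = (Measure.map (X 0) ℙ) (Set.Iic z) := by
      rw [Measure.map_apply (hmeas 0) measurableSet_Iic]; rfl
    rw [h1, h2, hident i]
  have hX0 : ℙ {ω | X 0 ω ≤ z} ≤ ENNReal.ofReal (Real.exp (-(2 * c / A z))) := by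
    have hcompl : {ω | X 0 ω ≤ z} = {ω | z < X 0 ω}ᶜ := by
      ext ω; simp [not_lt]
    have hmeasset : MeasurableSet {ω | z < X 0 ω} := measurableSet_lt measurable_const (hmeas 0)
    rw [hcompl, measure_compl hmeasset (measure_ne_top _ _)]
    have h1 : ℙ (Set.univ : Set Ω) - ℙ {ω | z < X 0 ω} ≤ 1 - ENNReal.ofReal (2 * c / A z) := by
      rw [measure_univ]
      exact tsub_le_tsub_left (htail z hz) 1
    refine le_trans h1 ?_
    have h2 : (1 : ℝ≥0∞) - ENNReal.ofReal (2 * c / A z) = ENNReal.ofReal (1 - 2 * c / A z) := by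
      rw [ENNReal.ofReal_sub _ (div_nonneg (by positivity) (hA_pos z hz).le), ENNReal.ofReal_one]
    rw [h2]
    apply ENNReal.ofReal_le_ofReal
    have := Real.add_one_le_exp (-(2 * c / A z))
    linarith
  have hνIic : ν (Set.Iic z) ≤ ENNReal.ofReal (Real.exp (-(2 * c / A z))) ^ m := by
    have hνeq : ν (Set.Iic z) = ℙ {ω | V ω ≤ z} := by
      rw [hν_def, Measure.map_apply hVmeas measurableSet_Iic]; rfl
    rw [hνeq]
    have hsub : {ω | V ω ≤ z} ⊆ ⋂ i ∈ Finset.Ico m (2 * m), {ω | X i ω ≤ z} := by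
      intro ω hω
      simp only [Set.mem_iInter]
      intro i hi
      have hle : X i ω ≤ V ω :=
        Finset.single_le_sum (fun j _ => hnonneg j ω) hi
      exact le_trans hle hω
    have hinter : ℙ (⋂ i ∈ Finset.Ico m (2 * m), {ω | X i ω ≤ z})
        = ∏ i ∈ Finset.Ico m (2 * m), ℙ {ω | X i ω ≤ z} := by
      apply hindep.meas_biInter
      intro i _
      exact ⟨Set.Iic z, measurableSet_Iic, rfl⟩
    calc ℙ {ω | V ω ≤ z} ≤ ℙ (⋂ i ∈ Finset.Ico m (2 * m), {ω | X i ω ≤ z}) :=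
          measure_mono hsub
      _ = ∏ i ∈ Finset.Ico m (2 * m), ℙ {ω | X i ω ≤ z} := hinter
      _ ≤ ∏ _i ∈ Finset.Ico m (2 * m), ENNReal.ofReal (Real.exp (-(2 * c / A z))) := by
          apply Finset.prod_le_prod' 
          intro i _
          rw [hp1 i]
          exact hX0
      _ = ENNReal.ofReal (Real.exp (-(2 * c / A z))) ^ m := by
          rw [Finset.prod_const, Nat.card_Ico]
          congr 1
          omega
  -- put it together
  rw [hevent, ← Measure.map_apply (hUmeas.prodMk hVmeas) hTmeas, hmap,
    Measure.prod_apply_symm hTmeas]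
  calc ∫⁻ y, μ ((fun x => (x, y)) ⁻¹' T) ∂ν
      ≤ ∫⁻ y, Set.indicator (Set.Iic z) (fun _ => ENNReal.ofReal (C₀ / a m)) y ∂ν :=
        lintegral_mono hslice
    _ = ENNReal.ofReal (C₀ / a m) * ν (Set.Iic z) :=
        lintegral_indicator_const measurableSet_Iic _
    _ ≤ ENNReal.ofReal (C₀ / a m) * ENNReal.ofReal (Real.exp (-(2 * c / A z))) ^ m :=
        mul_le_mul_right hνIic _
    _ = ENNReal.ofReal ((C₀ / a m) * Real.exp (-(c * (2 * m) / A z))) := by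
        rw [← ENNReal.ofReal_pow (Real.exp_nonneg _), ← Real.exp_nat_mul,
          ← ENNReal.ofReal_mul (div_nonneg hC₀.le (ha_pos m).le)]
        congr 2
        ring
end

section
/- Let (X_i) be i.i.d. real random variables with S_n = X_1+...+X_n, and let J ⊆ [0,∞) be a bounded Borel set. For any x ∈ ℝ and y > 0, with M_n = max_{i≤n} X_i and n even: P(S_n ∈ x+J, M_n ≤ y) ≤ 2 · sup_{w∈ℝ} P(S_{n/2} ∈ w+J) · P(S_{n/2} ≥ x/2, M_{n/2} ≤ y). -/
open MeasureTheory ProbabilityTheory Filter Set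
open scoped ENNReal NNReal

lemma pi_law {Ω : Type*} [MeasureSpace Ω] [IsProbabilityMeasure (ℙ : Measure Ω)]
    (X : ℕ → Ω → ℝ) (hmeas : ∀ i, Measurable (X i))
    (hindep : iIndepFun (m := fun _ => Real.measurableSpace) X ℙ)
    (k : ℕ) (g : Fin k → ℕ) (hg : Function.Injective g) :
    Measure.map (fun ω (i : Fin k) => X (g i) ω) ℙ
      = Measure.pi (fun i => Measure.map (X (g i)) ℙ) := by
  classical
  refine (Measure.pi_eq fun s hs => ?_).symm
  have hV : Measurable (fun ω (i : Fin k) => X (g i) ω) :=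
    measurable_pi_lambda _ fun i => hmeas (g i)
  rw [Measure.map_apply hV (MeasurableSet.univ_pi hs)]
  set sets : ℕ → Set ℝ := fun n => if h : ∃ i, g i = n then s h.choose else Set.univ with hsets_def
  have hsets : ∀ i, sets (g i) = s i := by
    intro i
    have h : ∃ j, g j = g i := ⟨i, rfl⟩
    simp only [hsets_def, dif_pos h]
    exact congrArg s (hg h.choose_spec)
  have hpre : (fun ω (i : Fin k) => X (g i) ω) ⁻¹' (Set.pi Set.univ s)
      = ⋂ n ∈ Finset.image g Finset.univ, X n ⁻¹' sets n := by
    ext ω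
    simp only [Set.mem_preimage, Set.mem_pi, Set.mem_univ, forall_true_left,
      Set.mem_iInter, Finset.mem_image, Finset.mem_univ, true_and]
    constructor
    · rintro h n ⟨i, rfl⟩
      rw [hsets]; exact h i
    · intro h i
      have := h (g i) ⟨i, rfl⟩
      rwa [hsets] at this
  rw [hpre, hindep.measure_inter_preimage_eq_mul _ (fun n _ => ?_),
    Finset.prod_image (fun a _ b _ h => hg h)]
  · refine Finset.prod_congr rfl fun i _ => ?_
    rw [hsets, Measure.map_apply (hmeas (g i)) (hs i)]
  · simp only [hsets_def]
    split
    · exact hs _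
    · exact MeasurableSet.univ

/-- For i.i.d. `X`, partial sums `S`, bounded Borel `J ⊆ [0,∞)`, `x : ℝ`,
`y > 0` and `n = 2m` even:
`P(S_n ∈ x+J, M_n ≤ y) ≤ 2 · sup_w P(S_{n/2} ∈ w+J) · P(S_{n/2} ≥ x/2, M_{n/2} ≤ y)`. -/
theorem stmt5 {Ω : Type*} [MeasureSpace Ω] [IsProbabilityMeasure (ℙ : Measure Ω)]
    (X : ℕ → Ω → ℝ) (hmeas : ∀ i, Measurable (X i))
    (hindep : iIndepFun (m := fun _ => Real.measurableSpace) X ℙ)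
    (hident : ∀ i, Measure.map (X i) ℙ = Measure.map (X 0) ℙ)
    (J : Set ℝ) (hJ : MeasurableSet J) (hJbdd : Bornology.IsBounded J)
    (hJpos : J ⊆ Set.Ici 0) (x : ℝ) (y : ℝ) (hy : 0 < y) (m : ℕ) :
    ℙ {ω | (∑ i ∈ Finset.range (2 * m), X i ω) - x ∈ J ∧ ∀ i < 2 * m, X i ω ≤ y}
      ≤ 2 * (⨆ w : ℝ, ℙ {ω | (∑ i ∈ Finset.range m, X i ω) - w ∈ J})
          * ℙ {ω | x / 2 ≤ (∑ i ∈ Finset.range m, X i ω) ∧ ∀ i < m, X i ω ≤ y} := by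
  classical
  have hprob0 : IsProbabilityMeasure (Measure.map (X 0) ℙ) :=
    Measure.isProbabilityMeasure_map (hmeas 0).aemeasurable
  set ν : Measure (Fin m → ℝ) := Measure.pi (fun _ => Measure.map (X 0) ℙ) with hν
  have hνprob : IsProbabilityMeasure ν := by rw [hν]; infer_instance
  set V : Ω → (Fin m → ℝ) := fun ω i => X i ω with hVdef
  set W : Ω → (Fin m → ℝ) := fun ω i => X (m + i) ω with hWdef
  have hVmeas : Measurable V := measurable_pi_lambda _ fun i => hmeas i
  have hWmeas : Measurable W := measurable_pi_lambda _ fun i => hmeas (m + i)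
  -- laws
  have hVlaw : Measure.map V ℙ = ν := by
    rw [pi_law X hmeas hindep m (fun i : Fin m => (i : ℕ)) (fun a b h => Fin.ext h)]
    rw [hν]
    congr 1
    funext i
    exact hident i
  have hWlaw : Measure.map W ℙ = ν := by
    rw [pi_law X hmeas hindep m (fun i : Fin m => m + (i : ℕ))
      (fun a b h => Fin.ext (Nat.add_left_cancel h))]
    rw [hν]
    congr 1
    funext i
    exact hident (m + i)
  -- independence
  have hIndep : IndepFun V W ℙ := by
    have hdisj : Disjoint (Finset.range m) (Finset.Ico m (2 * m)) := by
      rw [Finset.disjoint_left]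
      intro n hn hn'
      rw [Finset.mem_range] at hn
      rw [Finset.mem_Ico] at hn'
      omega
    have h := hindep.indepFun_finset (Finset.range m) (Finset.Ico m (2 * m)) hdisj hmeas
    have hφS : Measurable (fun (v : ∀ _ : (Finset.range m : Finset ℕ), ℝ) (i : Fin m) =>
        v ⟨(i : ℕ), Finset.mem_range.mpr i.isLt⟩) :=
      measurable_pi_lambda _ fun i => measurable_pi_apply _
    have hφT : Measurable (fun (v : ∀ _ : (Finset.Ico m (2 * m) : Finset ℕ), ℝ) (i : Fin m) =>
        v ⟨m + (i : ℕ), Finset.mem_Ico.mpr ⟨Nat.le_add_right _ _, by omega⟩⟩) :=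
      measurable_pi_lambda _ fun i => measurable_pi_apply _
    exact h.comp hφS hφT
  -- joint law
  have hjoint : Measure.map (fun ω => (V ω, W ω)) ℙ = ν.prod ν := by
    rw [(indepFun_iff_map_prod_eq_prod_map_map hVmeas.aemeasurable hWmeas.aemeasurable).mp hIndep,
      hVlaw, hWlaw]
  -- the key set
  set C : Set ((Fin m → ℝ) × (Fin m → ℝ)) :=
    {p | x / 2 ≤ (∑ i, p.1 i) ∧ (∀ i, p.1 i ≤ y) ∧ (∑ i, p.1 i) + (∑ i, p.2 i) - x ∈ J}
    with hCdef
  have hsum1 : Measurable fun p : (Fin m → ℝ) × (Fin m → ℝ) => ∑ i, p.1 i := by fun_prop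
  have hsum2 : Measurable fun p : (Fin m → ℝ) × (Fin m → ℝ) => ∑ i, p.2 i := by fun_prop
  have hCmeas : MeasurableSet C := by
    have h2 : MeasurableSet {p : (Fin m → ℝ) × (Fin m → ℝ) | ∀ i, p.1 i ≤ y} := by
      rw [Set.setOf_forall]
      exact MeasurableSet.iInter fun i =>
        measurableSet_le (by fun_prop : Measurable fun p : (Fin m → ℝ) × (Fin m → ℝ) => p.1 i)
          measurable_const
    exact (measurableSet_le measurable_const hsum1).inter
      (h2.inter (((hsum1.add hsum2).sub measurable_const) hJ))
  set B : Set (Fin m → ℝ) := {v | x / 2 ≤ (∑ i, v i) ∧ ∀ i, v i ≤ y} with hBdef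
  have hBmeas : MeasurableSet B := by
    have h2 : MeasurableSet {v : Fin m → ℝ | ∀ i, v i ≤ y} := by
      rw [Set.setOf_forall]
      exact MeasurableSet.iInter fun i =>
        measurableSet_le (measurable_pi_apply i) measurable_const
    exact (measurableSet_le measurable_const
      (by fun_prop : Measurable fun v : Fin m → ℝ => ∑ i, v i)).inter h2
  set K : ℝ≥0∞ := ⨆ w : ℝ, ℙ {ω | (∑ i ∈ Finset.range m, X i ω) - w ∈ J} with hKdef
  -- decomposition of the sum
  have hkey : ∀ ω, (∑ i ∈ Finset.range (2 * m), X i ω)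
      = (∑ i, V ω i) + (∑ i, W ω i) := by
    intro ω
    rw [two_mul, Finset.sum_range_add, ← Fin.sum_univ_eq_sum_range, ← Fin.sum_univ_eq_sum_range]
  -- inclusion
  have hsub : {ω | (∑ i ∈ Finset.range (2 * m), X i ω) - x ∈ J ∧ ∀ i < 2 * m, X i ω ≤ y}
      ⊆ ((fun ω => (V ω, W ω)) ⁻¹' C) ∪ ((fun ω => (V ω, W ω)) ⁻¹' (Prod.swap ⁻¹' C)) := by
    rintro ω ⟨hJω, hmax⟩
    have hab : (∑ i, V ω i) + (∑ i, W ω i) - x ∈ J := by rw [← hkey]; exact hJω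
    have hx : x ≤ (∑ i, V ω i) + (∑ i, W ω i) := by
      have := hJpos hab
      simp only [Set.mem_Ici] at this
      linarith
    have hmaxV : ∀ i : Fin m, V ω i ≤ y := fun i => hmax i (by omega)
    have hmaxW : ∀ i : Fin m, W ω i ≤ y := fun i => hmax (m + i) (by omega)
    rcases le_or_gt (x / 2) (∑ i, V ω i) with h | h
    · exact Or.inl ⟨h, hmaxV, hab⟩
    · refine Or.inr ?_
      show x / 2 ≤ (∑ i, W ω i) ∧ (∀ i, W ω i ≤ y) ∧ (∑ i, W ω i) + (∑ i, V ω i) - x ∈ J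
      refine ⟨by linarith, hmaxW, ?_⟩
      rwa [add_comm]

  -- transfer of B along V
  have hBpre : V ⁻¹' B
      = {ω | x / 2 ≤ (∑ i ∈ Finset.range m, X i ω) ∧ ∀ i < m, X i ω ≤ y} := by
    ext ω
    simp only [Set.mem_preimage, hBdef, Set.mem_setOf_eq, hVdef]
    rw [Fin.sum_univ_eq_sum_range (fun i => X i ω) m]
    constructor
    · rintro ⟨h1, h2⟩
      exact ⟨h1, fun i hi => h2 ⟨i, hi⟩⟩
    · rintro ⟨h1, h2⟩
      exact ⟨h1, fun i => h2 i i.isLt⟩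
  -- slice bound
  have hslice : ∀ v, ν (Prod.mk v ⁻¹' C) ≤ B.indicator (fun _ => K) v := by
    intro v
    by_cases hv : v ∈ B
    · rw [Set.indicator_of_mem hv]
      set c : ℝ := x - ∑ i, v i with hc
      have hsub2 : Prod.mk v ⁻¹' C ⊆ {w : Fin m → ℝ | (∑ i, w i) - c ∈ J} := by
        intro w hw
        have h3 := hw.2.2
        show (∑ i, w i) - c ∈ J
        have he : (∑ i, w i) - c = (∑ i, v i) + (∑ i, w i) - x := by rw [hc]; ring
        rw [he]; exact h3
      have hmble : MeasurableSet {w : Fin m → ℝ | (∑ i, w i) - c ∈ J} :=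
        ((by fun_prop : Measurable fun w : Fin m → ℝ => ∑ i, w i).sub measurable_const) hJ
      calc ν (Prod.mk v ⁻¹' C) ≤ ν {w : Fin m → ℝ | (∑ i, w i) - c ∈ J} := measure_mono hsub2
        _ = ℙ {ω | (∑ i ∈ Finset.range m, X i ω) - c ∈ J} := by
            rw [← hVlaw, Measure.map_apply hVmeas hmble]
            congr 1
            ext ω
            simp only [Set.mem_preimage, Set.mem_setOf_eq, hVdef]
            rw [Fin.sum_univ_eq_sum_range (fun i => X i ω) m]
        _ ≤ K := by
            rw [hKdef]
            exact le_iSup (fun w => ℙ {ω | (∑ i ∈ Finset.range m, X i ω) - w ∈ J}) c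
    · rw [Set.indicator_of_notMem hv]
      have hempty : Prod.mk v ⁻¹' C = ∅ := by
        ext w
        simp only [Set.mem_preimage, Set.mem_empty_iff_false, iff_false]
        rintro ⟨h1, h2, _⟩
        exact hv ⟨h1, h2⟩
      simp [hempty]
  -- core bound
  have hcore : (ν.prod ν) C
      ≤ K * ℙ {ω | x / 2 ≤ (∑ i ∈ Finset.range m, X i ω) ∧ ∀ i < m, X i ω ≤ y} := by
    rw [Measure.prod_apply hCmeas]
    calc ∫⁻ v, ν (Prod.mk v ⁻¹' C) ∂ν ≤ ∫⁻ v, B.indicator (fun _ => K) v ∂ν :=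
          lintegral_mono hslice
      _ = K * ν B := lintegral_indicator_const hBmeas K
      _ = K * ℙ {ω | x / 2 ≤ (∑ i ∈ Finset.range m, X i ω) ∧ ∀ i < m, X i ω ≤ y} := by
          rw [← hVlaw, Measure.map_apply hVmeas hBmeas, hBpre]
  -- put everything together
  have hpair : Measurable fun ω => (V ω, W ω) := hVmeas.prodMk hWmeas
  have hswap : (ν.prod ν) (Prod.swap ⁻¹' C) = (ν.prod ν) C := by
    conv_rhs => rw [← Measure.prod_swap]
    rw [Measure.map_apply measurable_swap hCmeas]
  calc ℙ {ω | (∑ i ∈ Finset.range (2 * m), X i ω) - x ∈ J ∧ ∀ i < 2 * m, X i ω ≤ y}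
      ≤ ℙ (((fun ω => (V ω, W ω)) ⁻¹' C) ∪ ((fun ω => (V ω, W ω)) ⁻¹' (Prod.swap ⁻¹' C))) :=
        measure_mono hsub
    _ ≤ ℙ ((fun ω => (V ω, W ω)) ⁻¹' C) + ℙ ((fun ω => (V ω, W ω)) ⁻¹' (Prod.swap ⁻¹' C)) :=
        measure_union_le _ _
    _ = (ν.prod ν) C + (ν.prod ν) (Prod.swap ⁻¹' C) := by
        rw [← hjoint, Measure.map_apply hpair hCmeas,
          Measure.map_apply hpair (measurable_swap hCmeas)]
    _ = 2 * (ν.prod ν) C := by rw [hswap, two_mul]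
    _ ≤ 2 * (K * ℙ {ω | x / 2 ≤ (∑ i ∈ Finset.range m, X i ω) ∧ ∀ i < m, X i ω ≤ y}) :=
        mul_le_mul_right hcore 2
    _ = 2 * K * ℙ {ω | x / 2 ≤ (∑ i ∈ Finset.range m, X i ω) ∧ ∀ i < m, X i ω ≤ y} :=
        (mul_assoc _ _ _).symm
end

section
/- Fix α ∈ (0,1) and let A(x) = x^α. Let (x_n) and (ε_n) be positive sequences with x_n → ∞ and ε_n → 0. Then there exists a probability measure F on (0,∞) such that: (i) x^α · F((x,∞)) → 0 as x → ∞, and (ii) F({x_n}) ≥ 2 ε_n / x_n^α for infinitely many n. -/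
open MeasureTheory Filter Set Real
open scoped ENNReal Topology

/-- For `α ∈ (0,1)` and positive sequences `x_n → ∞`, `ε_n → 0`, there is a
probability measure `F` on `(0,∞)` with `x^α F((x,∞)) → 0` as `x → ∞` and
`F({x_n}) ≥ 2 ε_n / x_n^α` for infinitely many `n`. -/
theorem stmt14 (α : ℝ) (hα0 : 0 < α) (hα1 : α < 1)
    (x ε : ℕ → ℝ) (hx_pos : ∀ n, 0 < x n) (hε_pos : ∀ n, 0 < ε n)
    (hx : Tendsto x atTop atTop) (hε : Tendsto ε atTop (𝓝 0)) :
    ∃ F : Measure ℝ, IsProbabilityMeasure F ∧ F (Set.Iic 0) = 0 ∧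
      Tendsto (fun t : ℝ => t ^ α * (F (Set.Ioi t)).toReal) atTop (𝓝 0) ∧
      {n : ℕ | 2 * ε n / (x n) ^ α ≤ (F {x n}).toReal}.Infinite := by
  classical
  have hchoice : ∀ (c b : ℝ) (N : ℕ), 0 < c → ∃ m, N < m ∧ b < x m ∧ ε m < c := by
    intro c b N hc
    have h1 : ∀ᶠ m in atTop, b < x m := hx.eventually_gt_atTop b
    have h2 : ∀ᶠ m in atTop, ε m < c := hε.eventually_lt_const hc
    have h3 : ∀ᶠ m in atTop, N < m := eventually_gt_atTop N
    exact ((h3.and (h1.and h2)).exists).imp (fun m h => ⟨h.1, h.2.1, h.2.2⟩)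
  obtain ⟨f, hf_mono, hy_mono, hy0, hεf⟩ : ∃ f : ℕ → ℕ, (∀ k, f k < f (k+1)) ∧
      (∀ k, x (f k) < x (f (k+1))) ∧ 1 < x (f 0) ∧ ∀ k, ε (f k) < (1/2)^k/4 := by
    choose g hg1 hg2 hg3 using fun (k : ℕ) (b : ℝ) (N : ℕ) =>
      hchoice ((1/2)^k/4) b N (by positivity)
    refine ⟨fun k => Nat.rec (g 0 1 0) (fun k prev => g (k+1) (x prev) prev) k,
      fun k => hg1 (k+1) _ _, fun k => hg2 (k+1) _ _, hg2 0 1 0, fun k => ?_⟩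
    cases k with
    | zero => exact hg3 0 1 0
    | succ k => exact hg3 (k+1) _ _
  set y : ℕ → ℝ := fun k => x (f k) with hydef
  have hy_sm : StrictMono y := strictMono_nat_of_lt_succ hy_mono
  have hy1 : ∀ k, 1 ≤ y k := fun k => hy0.le.trans (hy_sm.monotone (Nat.zero_le k))
  have hypos : ∀ k, 0 < y k := fun k => lt_of_lt_of_le one_pos (hy1 k)
  set w : ℕ → ℝ := fun k => 2 * ε (f k) / (y k) ^ α with hwdef
  have hw_pos : ∀ k, 0 < w k := by
    intro k
    have h1 := hε_pos (f k)
    have h2 : (0:ℝ) < y k ^ α := rpow_pos_of_pos (hypos k) α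
    positivity
  have hw_le : ∀ k, w k ≤ (1/2)^k / 2 := by
    intro k
    have h1 : (1:ℝ) ≤ y k ^ α := Real.one_le_rpow (hy1 k) hα0.le
    have h2 : (0:ℝ) ≤ 2 * ε (f k) := by have := hε_pos (f k); linarith
    calc w k ≤ 2 * ε (f k) / 1 := div_le_div_of_nonneg_left h2 one_pos h1
      _ = 2 * ε (f k) := div_one _
      _ ≤ (1/2)^k / 2 := by have := hεf k; linarith
  -- geometric facts
  have hgeom : ∑' j : ℕ, (2⁻¹ : ℝ≥0∞)^(j+1) = 1 := by
    simp only [pow_succ']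
    rw [ENNReal.tsum_mul_left, ENNReal.tsum_geometric]
    rw [ENNReal.one_sub_inv_two]
    simp [ENNReal.inv_mul_cancel]
  have hofreal_half : ∀ m : ℕ, ENNReal.ofReal ((1/2:ℝ)^m) = (2⁻¹:ℝ≥0∞)^m := by
    intro m
    rw [ENNReal.ofReal_pow (by norm_num)]
    rw [show (1/2:ℝ) = 2⁻¹ by norm_num, ENNReal.ofReal_inv_of_pos two_pos, ENNReal.ofReal_ofNat]
  set S : ℝ≥0∞ := ∑' k, ENNReal.ofReal (w k) with hSdef
  have hS_le : S ≤ 1 := by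
    have hterm : ∀ k, ENNReal.ofReal (w k) ≤ (2⁻¹ : ℝ≥0∞)^(k+1) := by
      intro k
      have he : ((1:ℝ)/2)^k/2 = (1/2 : ℝ)^(k+1) := by ring
      calc ENNReal.ofReal (w k) ≤ ENNReal.ofReal ((1/2:ℝ)^(k+1)) :=
            ENNReal.ofReal_le_ofReal (by rw [← he]; exact hw_le k)
        _ = (2⁻¹ : ℝ≥0∞)^(k+1) := hofreal_half (k+1)
    calc S ≤ ∑' k, (2⁻¹:ℝ≥0∞)^(k+1) := ENNReal.tsum_le_tsum hterm
      _ = 1 := hgeom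
  set F : Measure ℝ :=
    Measure.sum (fun k => ENNReal.ofReal (w k) • Measure.dirac (y k))
      + (1 - S) • Measure.dirac 1 with hFdef
  have hFapp : ∀ s : Set ℝ, MeasurableSet s →
      F s = (∑' k, ENNReal.ofReal (w k) * s.indicator 1 (y k))
        + (1 - S) * s.indicator 1 1 := by
    intro s hs
    rw [hFdef, Measure.add_apply, Measure.sum_apply _ hs, Measure.smul_apply,
      Measure.dirac_apply' _ hs, smul_eq_mul]
    congr 1
    refine tsum_congr fun k => ?_
    rw [Measure.smul_apply, Measure.dirac_apply' _ hs, smul_eq_mul]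
  have hFprob : IsProbabilityMeasure F := by
    constructor
    rw [hFapp univ MeasurableSet.univ]
    simp only [indicator_univ, Pi.one_apply, mul_one]
    exact add_tsub_cancel_of_le hS_le
  refine ⟨F, hFprob, ?_, ?_, ?_⟩
  · -- F (Iic 0) = 0
    rw [hFapp _ measurableSet_Iic]
    have h1 : ∀ k, Set.indicator (Iic (0:ℝ)) (1 : ℝ → ℝ≥0∞) (y k) = 0 := fun k =>
      indicator_of_notMem (by simp; exact hypos k) _
    have h2 : Set.indicator (Iic (0:ℝ)) (1 : ℝ → ℝ≥0∞) 1 = 0 :=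
      indicator_of_notMem (by simp) _
    simp [h1, h2]
  · -- tail tendsto
    rw [Metric.tendsto_atTop]
    intro e he
    obtain ⟨K, hK⟩ : ∃ K : ℕ, (1/2:ℝ)^K < e := exists_pow_lt_of_lt_one he (by norm_num)
    refine ⟨max 1 (y K), fun t ht => ?_⟩
    have ht1 : (1:ℝ) ≤ t := le_trans (le_max_left _ _) ht
    have htK : y K ≤ t := le_trans (le_max_right _ _) ht
    have htpos : (0:ℝ) < t := lt_of_lt_of_le one_pos ht1
    have hta : (0:ℝ) < t ^ α := rpow_pos_of_pos htpos α
    have hF_le : F (Ioi t) ≤ ENNReal.ofReal ((1/2)^K / t^α) := by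
      rw [hFapp _ measurableSet_Ioi]
      have h1 : Set.indicator (Ioi t) (1 : ℝ → ℝ≥0∞) 1 = 0 :=
        indicator_of_notMem (by simp; linarith) _
      rw [h1, mul_zero, add_zero]
      set c : ℝ≥0∞ := ENNReal.ofReal ((1/2)^K / t^α) with hcdef
      have hterm : ∀ k, ENNReal.ofReal (w k) * (Ioi t).indicator 1 (y k)
          ≤ (if k < K then 0 else c * (2⁻¹:ℝ≥0∞)^(k - K + 1)) := by
        intro k
        by_cases hmem : y k ∈ Ioi t
        · rw [indicator_of_mem hmem, Pi.one_apply, mul_one]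
          have hkK : ¬ k < K := by
            intro hlt
            have := hy_sm hlt
            have := mem_Ioi.mp hmem
            linarith
          rw [if_neg hkK]
          have hk : K ≤ k := not_lt.mp hkK
          have hwk : w k ≤ (1/2)^(k+1) / t^α := by
            have hyk : t ≤ y k := (mem_Ioi.mp hmem).le
            have hrp : t ^ α ≤ y k ^ α := Real.rpow_le_rpow htpos.le hyk hα0.le
            have h2 : 2 * ε (f k) ≤ (1/2)^(k+1) := by
              have := hεf k
              have : 2 * ε (f k) ≤ (1/2)^k/2 := by linarith
              calc 2 * ε (f k) ≤ (1/2)^k/2 := this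
                _ = (1/2)^(k+1) := by ring
            have h3 : (0:ℝ) ≤ 2 * ε (f k) := by have := hε_pos (f k); linarith
            calc w k = 2 * ε (f k) / y k ^ α := rfl
              _ ≤ 2 * ε (f k) / t ^ α := div_le_div_of_nonneg_left h3 hta hrp
              _ ≤ (1/2)^(k+1) / t^α := by gcongr
          rw [← hofreal_half (k - K + 1), hcdef, ← ENNReal.ofReal_mul (by positivity)]
          refine ENNReal.ofReal_le_ofReal (hwk.trans_eq ?_)
          rw [show ((1:ℝ)/2)^(k+1) = (1/2)^K * (1/2)^(k-K+1) from by
            rw [← pow_add]; congr 1; omega]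
          ring
        · rw [indicator_of_notMem hmem, mul_zero]
          exact zero_le
      calc (∑' k, ENNReal.ofReal (w k) * (Ioi t).indicator 1 (y k))
          ≤ ∑' k, (if k < K then 0 else c * (2⁻¹:ℝ≥0∞)^(k - K + 1)) :=
            ENNReal.tsum_le_tsum hterm
        _ = c := by
            have h := Summable.sum_add_tsum_nat_add'
              (f := fun k => if k < K then 0 else c * (2⁻¹:ℝ≥0∞)^(k - K + 1))
              (k := K) ENNReal.summable
            have h2 : ∑' j : ℕ, c * (2⁻¹:ℝ≥0∞)^(j + 1) = c := by
              rw [ENNReal.tsum_mul_left, hgeom, mul_one]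
            rw [← h, Finset.sum_eq_zero (fun k hk => if_pos (Finset.mem_range.mp hk)), zero_add,
              ← h2]
            refine tsum_congr fun j => ?_
            rw [if_neg (by omega)]
            congr 2
            omega
    have htr : (F (Ioi t)).toReal ≤ (1/2)^K / t^α :=
      ENNReal.toReal_le_of_le_ofReal (by positivity) hF_le
    rw [Real.dist_eq, sub_zero]
    have hnn : (0:ℝ) ≤ t ^ α * (F (Ioi t)).toReal := by positivity
    rw [abs_of_nonneg hnn]
    calc t ^ α * (F (Ioi t)).toReal ≤ t ^ α * ((1/2)^K / t^α) := by
          exact mul_le_mul_of_nonneg_left htr hta.le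
      _ = (1/2)^K := by rw [mul_comm, div_mul_cancel₀ _ hta.ne']
      _ < e := hK
  · -- infinitely many n
    apply Set.infinite_of_injective_forall_mem
      (f := f) (strictMono_nat_of_lt_succ hf_mono).injective
    intro k
    have hFk : ENNReal.ofReal (w k) ≤ F {x (f k)} := by
      rw [hFapp _ (measurableSet_singleton _)]
      calc ENNReal.ofReal (w k)
          = ENNReal.ofReal (w k) * ({x (f k)} : Set ℝ).indicator 1 (y k) := by
            rw [indicator_of_mem (show y k ∈ ({x (f k)} : Set ℝ) from rfl) (1 : ℝ → ℝ≥0∞), Pi.one_apply, mul_one]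
        _ ≤ ∑' j, ENNReal.ofReal (w j) * ({x (f k)} : Set ℝ).indicator 1 (y j) :=
            ENNReal.le_tsum k
        _ ≤ _ := le_add_of_nonneg_right zero_le
    have h2 := ENNReal.toReal_mono (measure_ne_top F _) hFk
    rw [ENNReal.toReal_ofReal (hw_pos k).le] at h2
    exact h2
end

section
/- Let F and G be finite Borel measures on ℝ, let 0 ≤ a₁ < a₂ ≤ ∞, γ ∈ (0,1), and set γ₁ = 1 − (2−γ)^{−1}, γ₂ = γ^{−1} − 1, γ̄ = 1 − γ. Then for all measurable f, g : ℝ → [0,∞) and all x ≥ 0: ∫_{y ∈ (a₁x, a₂x)} f(y) (∫_{|z| ≤ γ̄ y} g(z) G(−y + dz)) F(x + dy) ≤ ∫_{w ∈ (γ a₁ x, (2−γ) a₂ x)} (∫_{−γ₁ w ≤ v ≤ γ₂ w} f(w+v) g(v) F(x + w + dv)) G(−dw). -/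
open MeasureTheory Filter Set Real
open scoped ENNReal

/-- Generic Fubini/Tonelli swap-and-compare inequality. -/
lemma aux16 (F G : Measure ℝ) [SigmaFinite F] [SigmaFinite G]
    (A B : Set ℝ) (S C : ℝ → Set ℝ) (φ ψ : ℝ → ℝ → ℝ≥0∞)
    (hA : MeasurableSet A) (hS : ∀ u, MeasurableSet (S u))
    (hP : MeasurableSet {p : ℝ × ℝ | p.1 ∈ A ∧ p.2 ∈ S p.1})
    (hB : MeasurableSet B) (hC : ∀ v, MeasurableSet (C v))
    (hφ : Measurable fun p : ℝ × ℝ => φ p.1 p.2)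
    (key : ∀ u v, u ∈ A → v ∈ S u → v ∈ B ∧ u ∈ C v ∧ φ u v = ψ v u) :
    ∫⁻ u in A, ∫⁻ v in S u, φ u v ∂G ∂F ≤ ∫⁻ v in B, ∫⁻ u in C v, ψ v u ∂F ∂G := by
  classical
  set Φ : ℝ × ℝ → ℝ≥0∞ := fun p => if p.1 ∈ A ∧ p.2 ∈ S p.1 then φ p.1 p.2 else 0 with hΦdef
  have hΦmeas : Measurable Φ := Measurable.ite hP hφ measurable_const
  have h1 : ∫⁻ u in A, ∫⁻ v in S u, φ u v ∂G ∂F = ∫⁻ u, ∫⁻ v, Φ (u, v) ∂G ∂F := by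
    rw [← lintegral_indicator hA]
    refine lintegral_congr fun u => ?_
    by_cases hu : u ∈ A
    · rw [Set.indicator_of_mem hu, ← lintegral_indicator (hS u)]
      refine lintegral_congr fun v => ?_
      by_cases hv : v ∈ S u
      · simp [hΦdef, hu, hv]
      · simp [hΦdef, hu, hv]
    · rw [Set.indicator_of_notMem hu]
      symm
      simp [hΦdef, hu]
  have h2 : ∫⁻ u, ∫⁻ v, Φ (u, v) ∂G ∂F = ∫⁻ v, ∫⁻ u, Φ (u, v) ∂F ∂G :=
    lintegral_lintegral_swap hΦmeas.aemeasurable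
  have pointwise : ∀ u v, Φ (u, v) ≤ if v ∈ B then (C v).indicator (ψ v) u else 0 := by
    intro u v
    by_cases h : u ∈ A ∧ v ∈ S u
    · obtain ⟨hvB, huC, hφψ⟩ := key u v h.1 h.2
      simp only [hΦdef, if_pos h, if_pos hvB, Set.indicator_of_mem huC, hφψ, le_refl]
    · simp [hΦdef, h]
  have h3 : ∫⁻ v, ∫⁻ u, Φ (u, v) ∂F ∂G ≤ ∫⁻ v in B, ∫⁻ u in C v, ψ v u ∂F ∂G := by
    calc ∫⁻ v, ∫⁻ u, Φ (u, v) ∂F ∂G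
        ≤ ∫⁻ v, ∫⁻ u, (if v ∈ B then (C v).indicator (ψ v) u else 0) ∂F ∂G :=
          lintegral_mono fun v => lintegral_mono fun u => pointwise u v
      _ = ∫⁻ v in B, ∫⁻ u in C v, ψ v u ∂F ∂G := by
          rw [← lintegral_indicator hB]
          refine lintegral_congr fun v => ?_
          by_cases hv : v ∈ B
          · simp only [if_pos hv, Set.indicator_of_mem hv]
            rw [lintegral_indicator (hC v)]
          · simp [hv]
  calc ∫⁻ u in A, ∫⁻ v in S u, φ u v ∂G ∂F = ∫⁻ v, ∫⁻ u, Φ (u, v) ∂F ∂G := h1.trans h2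
    _ ≤ _ := h3

/-- The change-of-variables/Fubini inequality (8.1). Here, for a measure `F`,
`∫ φ(y) F(x+dy) := ∫ φ(u−x) F(du)`, `∫ φ(z) G(−y+dz) := ∫ φ(u+y) G(du)` and
`∫ ψ(w) G(−dw) := ∫ ψ(−u) G(du)`. With `γ₁ = 1−(2−γ)⁻¹`, `γ₂ = γ⁻¹−1`, `γ̄ = 1−γ`,
and `a₂ ∈ (a₁, ∞]` formalized as `a₂ : ℝ≥0∞`:
`∫_{y∈(a₁x,a₂x)} f(y) (∫_{|z|≤γ̄y} g(z) G(−y+dz)) F(x+dy)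
  ≤ ∫_{w∈(γa₁x,(2−γ)a₂x)} (∫_{−γ₁w≤v≤γ₂w} f(w+v) g(v) F(x+w+dv)) G(−dw)`. -/
theorem stmt16 (F G : Measure ℝ) [IsFiniteMeasure F] [IsFiniteMeasure G]
    (a₁ : ℝ) (ha₁ : 0 ≤ a₁) (a₂ : ℝ≥0∞) (ha₂ : ENNReal.ofReal a₁ < a₂)
    (γ : ℝ) (hγ0 : 0 < γ) (hγ1 : γ < 1)
    (f g : ℝ → ℝ) (hf : Measurable f) (hg : Measurable g)
    (hf0 : ∀ t, 0 ≤ f t) (hg0 : ∀ t, 0 ≤ g t) (x : ℝ) (hx : 0 ≤ x) :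
    ∫⁻ u in {u : ℝ | a₁ * x < u - x ∧ ENNReal.ofReal (u - x) < a₂ * ENNReal.ofReal x},
        ENNReal.ofReal (f (u - x)) *
          ∫⁻ v in {v : ℝ | |v + (u - x)| ≤ (1 - γ) * (u - x)},
            ENNReal.ofReal (g (v + (u - x))) ∂G ∂F
      ≤ ∫⁻ u in {u : ℝ | γ * a₁ * x < -u ∧
            ENNReal.ofReal (-u) < ENNReal.ofReal (2 - γ) * a₂ * ENNReal.ofReal x},
          (∫⁻ s in {s : ℝ | -((1 - (2 - γ)⁻¹) * (-u)) ≤ s - x - (-u) ∧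
              s - x - (-u) ≤ (γ⁻¹ - 1) * (-u)},
            ENNReal.ofReal (f (s - x)) * ENNReal.ofReal (g (s - x - (-u))) ∂F) ∂G := by
  classical
  have h2γ : (0:ℝ) < 2 - γ := by linarith
  have step1 :
      ∫⁻ u in {u : ℝ | a₁ * x < u - x ∧ ENNReal.ofReal (u - x) < a₂ * ENNReal.ofReal x},
        ENNReal.ofReal (f (u - x)) *
          ∫⁻ v in {v : ℝ | |v + (u - x)| ≤ (1 - γ) * (u - x)},
            ENNReal.ofReal (g (v + (u - x))) ∂G ∂F
      = ∫⁻ u in {u : ℝ | a₁ * x < u - x ∧ ENNReal.ofReal (u - x) < a₂ * ENNReal.ofReal x},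
          ∫⁻ v in {v : ℝ | |v + (u - x)| ≤ (1 - γ) * (u - x)},
            ENNReal.ofReal (f (u - x)) * ENNReal.ofReal (g (v + (u - x))) ∂G ∂F :=
    lintegral_congr fun u => (lintegral_const_mul' _ _ ENNReal.ofReal_ne_top).symm
  rw [step1]
  refine aux16 F G _ _ _ _
    (fun u v => ENNReal.ofReal (f (u - x)) * ENNReal.ofReal (g (v + (u - x))))
    (fun v u => ENNReal.ofReal (f (u - x)) * ENNReal.ofReal (g (u - x - (-v))))
    ?_ ?_ ?_ ?_ ?_ ?_ ?_
  · exact (measurableSet_lt measurable_const (measurable_id.sub_const x)).inter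
      ((ENNReal.measurable_ofReal.comp (measurable_id.sub_const x)) measurableSet_Iio)
  · intro u
    exact measurableSet_le (measurable_id.add_const (u - x)).abs measurable_const
  · refine MeasurableSet.inter ?_ ?_
    · refine MeasurableSet.inter ?_ ?_
      · exact measurableSet_lt measurable_const (measurable_fst.sub_const x)
      · exact (ENNReal.measurable_ofReal.comp (measurable_fst.sub_const x)) measurableSet_Iio
    · exact measurableSet_le (measurable_snd.add (measurable_fst.sub_const x)).abs
        (measurable_const.mul (measurable_fst.sub_const x))
  · exact (measurableSet_lt measurable_const measurable_neg).inter
      ((ENNReal.measurable_ofReal.comp measurable_neg) measurableSet_Iio)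
  · intro v
    exact (measurableSet_le measurable_const ((measurable_id.sub_const x).sub_const (-v))).inter
      (measurableSet_le ((measurable_id.sub_const x).sub_const (-v)) measurable_const)
  · exact (ENNReal.measurable_ofReal.comp (hf.comp (measurable_fst.sub_const x))).mul
      (ENNReal.measurable_ofReal.comp
        (hg.comp (measurable_snd.add (measurable_fst.sub_const x))))
  · rintro u v ⟨h1, h2⟩ hSv
    simp only [Set.mem_setOf_eq] at hSv ⊢
    have hy0 : 0 < u - x := lt_of_le_of_lt (mul_nonneg ha₁ hx) h1
    obtain ⟨hab1, hab2⟩ := abs_le.mp hSv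
    have hw1 : γ * (u - x) ≤ -v := by nlinarith
    have hw2 : -v ≤ (2 - γ) * (u - x) := by nlinarith
    refine ⟨⟨?_, ?_⟩, ⟨?_, ?_⟩, ?_⟩
    · calc γ * a₁ * x = γ * (a₁ * x) := by ring
        _ < γ * (u - x) := by exact mul_lt_mul_of_pos_left h1 hγ0
        _ ≤ -v := hw1
    · calc ENNReal.ofReal (-v) ≤ ENNReal.ofReal ((2 - γ) * (u - x)) :=
            ENNReal.ofReal_le_ofReal hw2
        _ = ENNReal.ofReal (2 - γ) * ENNReal.ofReal (u - x) :=
            ENNReal.ofReal_mul h2γ.le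
        _ < ENNReal.ofReal (2 - γ) * (a₂ * ENNReal.ofReal x) := by
            refine (ENNReal.mul_lt_mul_iff_right ?_ ?_).mpr h2
            · exact (ENNReal.ofReal_pos.mpr h2γ).ne'
            · exact ENNReal.ofReal_ne_top
        _ = ENNReal.ofReal (2 - γ) * a₂ * ENNReal.ofReal x := (mul_assoc _ _ _).symm
    · have hc : (0:ℝ) < (2 - γ)⁻¹ := inv_pos.mpr h2γ
      have hinv : (2 - γ) * (2 - γ)⁻¹ = 1 := mul_inv_cancel₀ h2γ.ne'
      have hcy : (2 - γ)⁻¹ * (-v) ≤ u - x := by nlinarith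
      nlinarith
    · have hc : (0:ℝ) < γ⁻¹ := inv_pos.mpr hγ0
      have hinv : γ * γ⁻¹ = 1 := mul_inv_cancel₀ hγ0.ne'
      have hcy : u - x ≤ γ⁻¹ * (-v) := by nlinarith
      nlinarith
    · have harg : v + (u - x) = u - x - (-v) := by ring
      rw [harg]
end
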